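/- Let 𝒯 be a countable set, R ⊆ 𝒯, and let ξ : 𝒯 → ℝ be square-summable with ξ_x ∈ (−1/2, 1/2] for all x. Write ‖ξ‖²_{2,Rᶜ} = Σ_{x ∈ 𝒯∖R} ξ_x² and f(ξ) = Σ_{x∈𝒯} (1 − cos(2πξ_x)). Then there is a real number ϑ with |ϑ| ≤ 1 such that f(ξ) = Σ_{x∈R} (1 − cos(2πξ_x)) + 2π²‖ξ‖²_{2,Rᶜ} − (π⁴/3)‖ξ‖⁴_{2,Rᶜ} + ϑ·(π⁴/3)‖ξ‖⁴_{2,Rᶜ}, where ‖ξ‖⁴_{2,Rᶜ} = (‖ξ‖²_{2,Rᶜ})². -/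

import Mathlib

open Real


lemma sin_lower_aux {t : ℝ} (ht : 0 ≤ t) : t - t ^ 3 / 6 ≤ Real.sin t := by
  have h1 : Real.sin t = ∫ s in (0:ℝ)..t, Real.cos s := by
    rw [integral_cos]; simp
  have h2 : (∫ s in (0:ℝ)..t, (1 - s ^ 2 / 2)) = t - t ^ 3 / 6 := by
    rw [intervalIntegral.integral_sub intervalIntegrable_const
      ((intervalIntegral.intervalIntegrable_pow 2).div_const 2)]
    rw [intervalIntegral.integral_div, integral_pow]
    simp; ring
  rw [h1, ← h2]
  apply intervalIntegral.integral_mono_on ht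
  · exact (Continuous.intervalIntegrable (by continuity) _ _)
  · exact (Continuous.intervalIntegrable Real.continuous_cos _ _)
  · intro s _
    exact Real.one_sub_sq_div_two_le_cos

lemma cos_upper_aux (t : ℝ) : Real.cos t ≤ 1 - t ^ 2 / 2 + t ^ 4 / 24 := by
  wlog ht : 0 ≤ t with H
  · have := H (-t) (by linarith [le_of_not_ge ht])
    have e2 : (-t) ^ 2 = t ^ 2 := by ring
    have e4 : (-t) ^ 4 = t ^ 4 := by ring
    rwa [e2, e4, Real.cos_neg] at this
  have h1 : 1 - Real.cos t = ∫ s in (0:ℝ)..t, Real.sin s := by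
    rw [integral_sin]; simp
  have h2 : (∫ s in (0:ℝ)..t, (s - s ^ 3 / 6)) = t ^ 2 / 2 - t ^ 4 / 24 := by
    rw [intervalIntegral.integral_sub intervalIntegral.intervalIntegrable_id
      ((intervalIntegral.intervalIntegrable_pow 3).div_const 6)]
    rw [intervalIntegral.integral_div, integral_pow, integral_id]
    ring
  have h3 : t ^ 2 / 2 - t ^ 4 / 24 ≤ 1 - Real.cos t := by
    rw [h1, ← h2]
    apply intervalIntegral.integral_mono_on ht
    · exact (Continuous.intervalIntegrable (by continuity) _ _)
    · exact (Continuous.intervalIntegrable Real.continuous_sin _ _)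
    · intro s hs
      exact sin_lower_aux hs.1
  linarith

/-- For a countable set `𝒯`, `R ⊆ 𝒯`, and square-summable `ξ : 𝒯 → (−1/2, 1/2]`, there is
`ϑ` with `|ϑ| ≤ 1` such that
`f(ξ) = Σ_{x∈R} (1 − cos(2πξ_x)) + 2π²‖ξ‖²_{2,Rᶜ} − (π⁴/3)‖ξ‖⁴_{2,Rᶜ} + ϑ(π⁴/3)‖ξ‖⁴_{2,Rᶜ}`. -/
theorem cosine_sum_tail_approx {T : Type*} [Countable T] (R : Set T) (ξ : T → ℝ)
    (hsum : Summable (fun x => ξ x ^ 2))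
    (hbdd : ∀ x, ξ x ∈ Set.Ioc (-(1 / 2) : ℝ) (1 / 2)) :
    ∃ ϑ : ℝ, |ϑ| ≤ 1 ∧
      ∑' x : T, (1 - Real.cos (2 * π * ξ x)) =
        (∑' x : R, (1 - Real.cos (2 * π * ξ (x : T)))) +
          2 * π ^ 2 * (∑' x : ↥(Rᶜ), ξ (x : T) ^ 2) -
          π ^ 4 / 3 * (∑' x : ↥(Rᶜ), ξ (x : T) ^ 2) ^ 2 +
          ϑ * (π ^ 4 / 3) * (∑' x : ↥(Rᶜ), ξ (x : T) ^ 2) ^ 2 := by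
  set g : T → ℝ := fun x => 1 - Real.cos (2 * π * ξ x) with hg_def
  have hg_nonneg : ∀ x, 0 ≤ g x := fun x => by
    simpa [hg_def] using Real.cos_le_one (2 * π * ξ x)
  have hg_upper : ∀ x, g x ≤ 2 * π ^ 2 * ξ x ^ 2 := by
    intro x
    have := Real.one_sub_sq_div_two_le_cos (x := 2 * π * ξ x)
    simp only [hg_def]
    nlinarith [this]
  have hg_lower : ∀ x, 2 * π ^ 2 * ξ x ^ 2 - 2 * π ^ 4 / 3 * (ξ x ^ 2) ^ 2 ≤ g x := by
    intro x
    have := cos_upper_aux (2 * π * ξ x)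
    simp only [hg_def]
    nlinarith [this]
  have hg_sum : Summable g :=
    Summable.of_nonneg_of_le hg_nonneg hg_upper (hsum.mul_left _)
  -- split
  have hsplit : (∑' x : R, g x) + (∑' x : ↥(Rᶜ), g x) = ∑' x : T, g x :=
    Summable.tsum_subtype_add_tsum_subtype_compl hg_sum R
  set S : ℝ := ∑' x : ↥(Rᶜ), ξ (x : T) ^ 2 with hS_def
  set D : ℝ := ∑' x : ↥(Rᶜ), g x with hD_def
  have hsumC : Summable (fun x : ↥(Rᶜ) => ξ (x : T) ^ 2) := hsum.subtype _
  have hgC : Summable (fun x : ↥(Rᶜ) => g (x : T)) := hg_sum.subtype _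
  have hS_nonneg : 0 ≤ S := tsum_nonneg fun x => sq_nonneg _
  -- quartic sum
  have hsum4 : Summable (fun x : ↥(Rᶜ) => (ξ (x : T) ^ 2) ^ 2) := by
    apply Summable.of_nonneg_of_le (fun x => sq_nonneg _) _ hsumC
    intro x
    have h := hbdd (x : T)
    have h1 : ξ (x : T) ^ 2 ≤ 1 := by nlinarith [h.1, h.2]
    nlinarith [sq_nonneg (ξ (x : T))]
  have hQ : (∑' x : ↥(Rᶜ), (ξ (x : T) ^ 2) ^ 2) ≤ S ^ 2 := by
    have hle : ∀ x : ↥(Rᶜ), (ξ (x : T) ^ 2) ^ 2 ≤ ξ (x : T) ^ 2 * S := by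
      intro x
      have hx : ξ (x : T) ^ 2 ≤ S := Summable.le_tsum hsumC x fun y _ => sq_nonneg _
      nlinarith [sq_nonneg (ξ (x : T))]
    calc (∑' x : ↥(Rᶜ), (ξ (x : T) ^ 2) ^ 2) ≤ ∑' x : ↥(Rᶜ), ξ (x : T) ^ 2 * S :=
          Summable.tsum_le_tsum hle hsum4 (hsumC.mul_right _)
      _ = S ^ 2 := by rw [tsum_mul_right, sq]
  have hQ_nonneg : 0 ≤ ∑' x : ↥(Rᶜ), (ξ (x : T) ^ 2) ^ 2 := tsum_nonneg fun _ => sq_nonneg _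
  -- bounds on D
  have hD_upper : D ≤ 2 * π ^ 2 * S := by
    rw [hD_def, hS_def, ← tsum_mul_left]
    exact Summable.tsum_le_tsum (fun x => hg_upper _) hgC ((hsumC).mul_left _)
  have hD_lower : 2 * π ^ 2 * S - 2 * π ^ 4 / 3 * S ^ 2 ≤ D := by
    have h1 : (∑' x : ↥(Rᶜ), (2 * π ^ 2 * ξ (x : T) ^ 2 - 2 * π ^ 4 / 3 * (ξ (x : T) ^ 2) ^ 2))
        ≤ D := Summable.tsum_le_tsum (fun x => hg_lower _)
          (((hsumC).mul_left _).sub ((hsum4).mul_left _)) hgC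
    rw [Summable.tsum_sub ((hsumC).mul_left _) ((hsum4).mul_left _), tsum_mul_left, tsum_mul_left] at h1
    have h2 : 2 * π ^ 4 / 3 * (∑' x : ↥(Rᶜ), (ξ (x : T) ^ 2) ^ 2) ≤ 2 * π ^ 4 / 3 * S ^ 2 := by
      apply mul_le_mul_of_nonneg_left hQ
      positivity
    linarith
  -- split case on S
  rcases eq_or_ne S 0 with hS0 | hS0
  · refine ⟨0, by simp, ?_⟩
    have hD0 : D = 0 := by
      have : ∀ x : ↥(Rᶜ), g (x : T) = 0 := by
        intro x
        have hx : ξ (x : T) ^ 2 = 0 := by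
          have h1 : ξ (x : T) ^ 2 ≤ S := Summable.le_tsum hsumC x fun y _ => sq_nonneg _
          nlinarith [sq_nonneg (ξ (x : T))]
        have : ξ (x : T) = 0 := by nlinarith
        simp [hg_def, this]
      simp [hD_def, this]
    rw [← hsplit, hS0, hD0]
    ring
  · have hC : 0 < π ^ 4 / 3 * S ^ 2 := by
      have : 0 < S ^ 2 := by positivity
      positivity
    refine ⟨(D - 2 * π ^ 2 * S + π ^ 4 / 3 * S ^ 2) / (π ^ 4 / 3 * S ^ 2), ?_, ?_⟩
    · rw [abs_div, div_le_one (by positivity)]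
      rw [abs_of_pos hC, abs_le]
      constructor <;> nlinarith
    · rw [← hsplit]
      field_simp
      ring
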